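/- Let S be an m × N real matrix, A a K × N real matrix, b ∈ ℝ^K, and M = {v ∈ ℝ^N | S v = 0, A v ≤ b}, assumed nonempty. Let B = {c ∈ ℝ^N | the function v ↦ cᵀ v is bounded above on M}. Then for Lebesgue-almost every c ∈ B, there exists a unique v ∈ M maximizing cᵀ v over M, and this unique maximizer is an extreme point of M. Equivalently, the set of c ∈ B for which there is not a unique maximizer located at an extreme point of M has Lebesgue measure zero in ℝ^N. -/

import Mathlib

open Matrix MeasureTheory Metric Set

private lemma dot_cont (N : ℕ) (c : Fin N → ℝ) :
    Continuous fun v : Fin N → ℝ => c ⬝ᵥ v := by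
  simp only [dotProduct]
  exact continuous_finset_sum _ fun i _ => continuous_const.mul (continuous_apply i)

/-- Main analytic lemma: for any closed nonempty `M`, almost every `c` for which
`v ↦ c ⬝ᵥ v` is bounded above on `M` admits a unique maximizer. -/
private theorem aux12 (N : ℕ) (M : Set (Fin N → ℝ)) (hMcl : IsClosed M) (hMne : M.Nonempty) :
    volume {c : Fin N → ℝ | (∃ C : ℝ, ∀ v ∈ M, c ⬝ᵥ v ≤ C) ∧
      ¬∃ v ∈ M, (∀ w ∈ M, c ⬝ᵥ w ≤ c ⬝ᵥ v) ∧
        (∀ v' ∈ M, (∀ w ∈ M, c ⬝ᵥ w ≤ c ⬝ᵥ v') → v' = v)} = 0 := by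
  classical
  obtain ⟨v₀, hv₀⟩ := hMne
  set B : Set (Fin N → ℝ) := {c | ∃ C : ℝ, ∀ v ∈ M, c ⬝ᵥ v ≤ C} with hBdef
  set f : (Fin N → ℝ) → ℝ := fun c => sSup ((fun v => c ⬝ᵥ v) '' M) with hfdef
  have himne : ∀ c : Fin N → ℝ, ((fun v => c ⬝ᵥ v) '' M).Nonempty := fun c => ⟨_, v₀, hv₀, rfl⟩
  have hbdd : ∀ c ∈ B, BddAbove ((fun v => c ⬝ᵥ v) '' M) := by
    rintro c ⟨C, hC⟩
    exact ⟨C, by rintro _ ⟨v, hv, rfl⟩; exact hC v hv⟩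
  have hle_f : ∀ c ∈ B, ∀ v ∈ M, c ⬝ᵥ v ≤ f c := fun c hc v hv =>
    le_csSup (hbdd c hc) ⟨v, hv, rfl⟩
  have hf_le : ∀ c : Fin N → ℝ, ∀ C : ℝ, (∀ v ∈ M, c ⬝ᵥ v ≤ C) → f c ≤ C := fun c C hC =>
    csSup_le (himne c) (by rintro _ ⟨v, hv, rfl⟩; exact hC v hv)
  have hBconv : Convex ℝ B := by
    rintro x ⟨Cx, hCx⟩ y ⟨Cy, hCy⟩ a b ha hb hab
    refine ⟨a * Cx + b * Cy, fun v hv => ?_⟩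
    have hdv : (a • x + b • y) ⬝ᵥ v = a * (x ⬝ᵥ v) + b * (y ⬝ᵥ v) := by
      simp [add_dotProduct, smul_dotProduct, smul_eq_mul]
    rw [hdv]
    exact add_le_add (mul_le_mul_of_nonneg_left (hCx v hv) ha)
      (mul_le_mul_of_nonneg_left (hCy v hv) hb)
  have hfconv : ConvexOn ℝ B f := by
    refine ⟨hBconv, fun x hx y hy a b ha hb hab => ?_⟩
    refine hf_le _ _ fun v hv => ?_
    have hdv : (a • x + b • y) ⬝ᵥ v = a * (x ⬝ᵥ v) + b * (y ⬝ᵥ v) := by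
      simp [add_dotProduct, smul_dotProduct, smul_eq_mul]
    rw [hdv]
    simp only [smul_eq_mul]
    exact add_le_add (mul_le_mul_of_nonneg_left (hle_f x hx v hv) ha)
      (mul_le_mul_of_nonneg_left (hle_f y hy v hv) hb)
  have hnorm_sq : ∀ u : Fin N → ℝ, ‖u‖ ^ 2 ≤ u ⬝ᵥ u := by
    intro u
    have hdef : u ⬝ᵥ u = ∑ j, u j * u j := rfl
    have hnn : (0:ℝ) ≤ u ⬝ᵥ u := by
      rw [hdef]; exact Finset.sum_nonneg fun j _ => mul_self_nonneg (u j)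
    have h1 : ∀ i, u i ^ 2 ≤ u ⬝ᵥ u := by
      intro i
      rw [hdef]
      have h2 : u i * u i ≤ ∑ j, u j * u j := by
        simpa using Finset.single_le_sum (f := fun j => u j * u j)
          (fun j _ => mul_self_nonneg (u j)) (Finset.mem_univ i)
      rw [pow_two]; exact h2
    have hle : ‖u‖ ≤ Real.sqrt (u ⬝ᵥ u) := by
      refine (pi_norm_le_iff_of_nonneg (Real.sqrt_nonneg _)).2 fun i => ?_
      rw [show ‖u i‖ = |u i| from rfl]
      have := h1 i
      nlinarith [Real.sq_sqrt hnn, Real.sqrt_nonneg (u ⬝ᵥ u), abs_nonneg (u i), sq_abs (u i)]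
    nlinarith [Real.sq_sqrt hnn, norm_nonneg u]
  have hdot_le : ∀ u w : Fin N → ℝ, |u ⬝ᵥ w| ≤ ‖u‖ * ∑ i, |w i| := by
    intro u w
    calc |u ⬝ᵥ w| ≤ ∑ i, |u i * w i| := Finset.abs_sum_le_sum_abs _ _
    _ ≤ ∑ i, ‖u‖ * |w i| := by
        refine Finset.sum_le_sum fun i _ => ?_
        rw [abs_mul]
        exact mul_le_mul_of_nonneg_right
          (by simpa using norm_le_pi_norm u i) (abs_nonneg _)
    _ = ‖u‖ * ∑ i, |w i| := by rw [Finset.mul_sum]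
  -- the key pointwise statement
  have hkey : ∀ c, c ∈ interior B → DifferentiableAt ℝ f c →
      ∃ v ∈ M, (∀ w ∈ M, c ⬝ᵥ w ≤ c ⬝ᵥ v) ∧
        (∀ v' ∈ M, (∀ w ∈ M, c ⬝ᵥ w ≤ c ⬝ᵥ v') → v' = v) := by
    intro c hc hdiff
    obtain ⟨K, t, ht, hlip⟩ := hfconv.locallyLipschitzOn_interior hc
    rw [mem_nhdsWithin] at ht
    obtain ⟨uo, huo, hcu, hut⟩ := ht
    obtain ⟨ε, hε, hball⟩ := Metric.isOpen_iff.1 (huo.inter isOpen_interior) c ⟨hcu, hc⟩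
    have hballB : ball c ε ⊆ B := fun x hx => interior_subset (hball hx).2
    have hballt : ball c ε ⊆ t := fun x hx => hut ⟨(hball hx).1, (hball hx).2⟩
    have hcB : c ∈ B := hballB (mem_ball_self hε)
    set Cb : ℝ := f c + K * ε with hCb
    have hfb : ∀ c' ∈ ball c ε, f c' ≤ Cb := by
      intro c' hc'
      have hd := hlip.dist_le_mul c' (hballt hc') c (hballt (mem_ball_self hε))
      have hdd : dist c' c < ε := mem_ball.1 hc'
      have habs : |f c' - f c| ≤ (K:ℝ) * dist c' c := by
        simpa [Real.dist_eq] using hd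
      have hK : (0:ℝ) ≤ (K:ℝ) := K.coe_nonneg
      have := (abs_le.1 habs).2
      nlinarith [dist_nonneg (x := c') (y := c)]
    set Sv : ℝ := ∑ i, |v₀ i| with hSv
    set R : ℝ := max ((Cb - c ⬝ᵥ v₀) * (2 / ε) + Sv) 0 with hRdef
    have hsub : ∀ v ∈ M, c ⬝ᵥ v₀ ≤ c ⬝ᵥ v → ‖v - v₀‖ ≤ R := by
      intro v hv hvge
      set u : Fin N → ℝ := v - v₀ with hu
      rcases eq_or_ne u 0 with h0 | h0
      · rw [h0, norm_zero]; exact le_max_right _ _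
      · have hun : 0 < ‖u‖ := norm_pos_iff.2 h0
        set s : ℝ := ε / (2 * ‖u‖) with hs
        have hspos : 0 < s := by positivity
        set c' : Fin N → ℝ := c + s • u with hc'
        have hmem : c' ∈ ball c ε := by
          rw [mem_ball, dist_eq_norm]
          have h1 : c' - c = s • u := by rw [hc']; abel
          rw [h1, norm_smul, Real.norm_eq_abs, abs_of_pos hspos]
          have : s * ‖u‖ = ε / 2 := by
            rw [hs]; field_simp
          rw [this]; linarith
        have h1 : c' ⬝ᵥ v ≤ Cb := le_trans (hle_f c' (hballB hmem) v hv) (hfb c' hmem)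
        have h2 : c' ⬝ᵥ v = c ⬝ᵥ v + s * (u ⬝ᵥ v) := by
          rw [hc', add_dotProduct, smul_dotProduct, smul_eq_mul]
        have h3 : u ⬝ᵥ v = u ⬝ᵥ v₀ + u ⬝ᵥ u := by
          have hveq : v = v₀ + u := by rw [hu]; abel
          conv_lhs => rw [hveq]
          rw [dotProduct_add]
        have h4 := hnorm_sq u
        have h5 := (abs_le.1 (hdot_le u v₀)).1
        have e1 : s * ‖u‖ ^ 2 = (ε / 2) * ‖u‖ := by
          rw [hs]; field_simp
        have e2 : s * ‖u‖ = ε / 2 := by rw [hs]; field_simp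
        have key : (ε / 2) * ‖u‖ ≤ (Cb - c ⬝ᵥ v₀) + (ε / 2) * Sv := by
          have hm1 : s * (‖u‖ ^ 2) ≤ s * (u ⬝ᵥ u) := mul_le_mul_of_nonneg_left h4 hspos.le
          have hm2 : s * (-(‖u‖ * Sv)) ≤ s * (u ⬝ᵥ v₀) := mul_le_mul_of_nonneg_left h5 hspos.le
          have hm3 : s * (‖u‖ * Sv) = (ε / 2) * Sv := by rw [hs]; field_simp
          nlinarith
        have hfinal : ‖u‖ ≤ (Cb - c ⬝ᵥ v₀) * (2 / ε) + Sv := by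
          have hrw : ((Cb - c ⬝ᵥ v₀) * (2 / ε) + Sv) * (ε / 2) = (Cb - c ⬝ᵥ v₀) + (ε / 2) * Sv := by
            field_simp
          nlinarith [mul_le_mul_of_nonneg_right key (le_of_lt (show (0:ℝ) < 2/ε by positivity)),
            mul_pos hε (hε)]
        exact le_trans hfinal (le_max_left _ _)
    -- compactness and existence of a maximizer
    set M' : Set (Fin N → ℝ) := M ∩ {v | c ⬝ᵥ v₀ ≤ c ⬝ᵥ v} with hM'
    have hM'cl : IsClosed M' := hMcl.inter (isClosed_le continuous_const (dot_cont N c))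
    have hM'sub : M' ⊆ closedBall v₀ R := by
      rintro v ⟨hv1, hv2⟩
      rw [mem_closedBall, dist_eq_norm]
      exact hsub v hv1 hv2
    have hM'cp : IsCompact M' := (isCompact_closedBall v₀ R).of_isClosed_subset hM'cl hM'sub
    obtain ⟨v, hvM', hvmax⟩ := hM'cp.exists_isMaxOn ⟨v₀, hv₀, le_refl (c ⬝ᵥ v₀)⟩
      ((dot_cont N c).continuousOn)
    have hvmax' := isMaxOn_iff.1 hvmax
    have hmax : ∀ w ∈ M, c ⬝ᵥ w ≤ c ⬝ᵥ v := by
      intro w hw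
      rcases le_or_gt (c ⬝ᵥ v₀) (c ⬝ᵥ w) with h | h
      · exact hvmax' w ⟨hw, h⟩
      · exact le_trans h.le (hvmax' v₀ ⟨hv₀, le_refl (c ⬝ᵥ v₀)⟩)
    -- gradient characterization of any maximizer
    have hgrad : ∀ w ∈ M, (∀ x ∈ M, c ⬝ᵥ x ≤ c ⬝ᵥ w) →
        ∀ j, w j = fderiv ℝ f c (Pi.single j 1) := by
      intro w hw hwmax j
      set L : (Fin N → ℝ) →L[ℝ] ℝ := ∑ i, w i • ContinuousLinearMap.proj i with hL
      have hLapp : ∀ c' : Fin N → ℝ, L c' = c' ⬝ᵥ w := by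
        intro c'
        simp only [hL, ContinuousLinearMap.sum_apply, ContinuousLinearMap.smul_apply,
          ContinuousLinearMap.proj_apply, smul_eq_mul, dotProduct]
        exact Finset.sum_congr rfl fun i _ => mul_comm _ _
      have hfun : (fun c' : Fin N → ℝ => c' ⬝ᵥ w) = ⇑L := funext fun c' => (hLapp c').symm
      have hLd : HasFDerivAt (fun c' : Fin N → ℝ => c' ⬝ᵥ w) L c := by
        rw [hfun]; exact L.hasFDerivAt
      have hfcw : f c = c ⬝ᵥ w := le_antisymm (hf_le c _ hwmax) (hle_f c hcB w hw)
      have hmin : IsLocalMin (fun c' => f c' - c' ⬝ᵥ w) c := by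
        have hball' : ball c ε ∈ nhds c := ball_mem_nhds c hε
        have : ∀ᶠ c' in nhds c,
            (fun c' => f c' - c' ⬝ᵥ w) c ≤ (fun c' => f c' - c' ⬝ᵥ w) c' := by
          filter_upwards [hball'] with c' hc'
          have h1 : c' ⬝ᵥ w ≤ f c' := hle_f c' (hballB hc') w hw
          show f c - c ⬝ᵥ w ≤ f c' - c' ⬝ᵥ w
          linarith [hfcw.le, hfcw.ge]
        exact this
      have h0 : fderiv ℝ (fun c' => f c' - c' ⬝ᵥ w) c = 0 := hmin.fderiv_eq_zero
      have hsub' : fderiv ℝ (fun c' => f c' - c' ⬝ᵥ w) c = fderiv ℝ f c - L := by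
        rw [fderiv_fun_sub hdiff hLd.differentiableAt, hLd.fderiv]
      have hLf : fderiv ℝ f c = L := by
        have := hsub' ▸ h0
        rwa [sub_eq_zero] at this
      rw [hLf, hLapp, single_dotProduct, one_mul]
    refine ⟨v, hvM'.1, hmax, fun v' hv' hmax' => funext fun j => ?_⟩
    rw [hgrad v' hv' hmax' j, hgrad v hvM'.1 hmax j]
  -- null sets
  have hN1 : volume (frontier B) = 0 := hBconv.addHaar_frontier volume
  set ND : Set (Fin N → ℝ) := {c | c ∈ interior B ∧ ¬ DifferentiableAt ℝ f c} with hND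
  have hN2 : volume ND = 0 := by
    apply measure_null_of_locally_null
    intro x hx
    obtain ⟨K, t, ht, hlip⟩ := hfconv.locallyLipschitzOn_interior hx.1
    rw [mem_nhdsWithin] at ht
    obtain ⟨uo, huo, hxu, hut⟩ := ht
    obtain ⟨ε, hε, hball⟩ := Metric.isOpen_iff.1 (huo.inter isOpen_interior) x ⟨hxu, hx.1⟩
    refine ⟨ball x ε ∩ ND,
      Filter.inter_mem (nhdsWithin_le_nhds (ball_mem_nhds x hε)) self_mem_nhdsWithin, ?_⟩
    have hlip' : LipschitzOnWith K f (ball x ε) :=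
      hlip.mono fun y hy => hut ⟨(hball hy).1, (hball hy).2⟩
    have hae := hlip'.ae_differentiableWithinAt_of_mem (μ := volume)
    have hae' : ∀ᵐ y, y ∈ ball x ε → DifferentiableAt ℝ f y := by
      filter_upwards [hae] with y hy hym
      exact (hy hym).differentiableAt ((isOpen_ball).mem_nhds hym)
    refine measure_mono_null ?_ (ae_iff.1 hae')
    rintro y ⟨hy1, hy2⟩
    simp only [Set.mem_setOf_eq, Classical.not_imp]
    exact ⟨hy1, hy2.2⟩
  refine measure_mono_null (fun c hc => ?_) (measure_union_null hN1 hN2)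
  obtain ⟨hcB, hcbad⟩ := hc
  by_cases hci : c ∈ interior B
  · right
    refine ⟨hci, fun hdiff => hcbad ?_⟩
    exact hkey c hci hdiff
  · left
    exact ⟨subset_closure hcB, hci⟩

theorem stmt12 (m N K : ℕ) (S : Matrix (Fin m) (Fin N) ℝ)
    (A : Matrix (Fin K) (Fin N) ℝ) (b : Fin K → ℝ)
    (M : Set (Fin N → ℝ)) (hM : M = {v | S.mulVec v = 0 ∧ A.mulVec v ≤ b})
    (hMne : M.Nonempty)
    (B : Set (Fin N → ℝ)) (hB : B = {c | ∃ C : ℝ, ∀ v ∈ M, c ⬝ᵥ v ≤ C}) :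
    volume {c ∈ B | ¬∃ v ∈ M,
      (∀ w ∈ M, c ⬝ᵥ w ≤ c ⬝ᵥ v) ∧
      (∀ v' ∈ M, (∀ w ∈ M, c ⬝ᵥ w ≤ c ⬝ᵥ v') → v' = v) ∧
      (¬∃ (x y : Fin N → ℝ) (a β : ℝ), x ∈ M ∧ y ∈ M ∧ x ≠ y ∧
        a + β = 1 ∧ 0 < a ∧ a < 1 ∧ v = a • x + β • y)} = 0 := by
  have hMcl : IsClosed M := by
    rw [hM]
    have h1 : IsClosed {v : Fin N → ℝ | S.mulVec v = 0} := by
      have hc : Continuous fun v : Fin N → ℝ => S.mulVec v :=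
        continuous_pi fun i => by
          simpa [Matrix.mulVec] using dot_cont N (fun j => S i j)
      exact isClosed_eq hc continuous_const
    have h2 : IsClosed {v : Fin N → ℝ | A.mulVec v ≤ b} := by
      have heq : {v : Fin N → ℝ | A.mulVec v ≤ b} = ⋂ i, {v | A.mulVec v i ≤ b i} := by
        ext v; simp [Pi.le_def, Set.mem_iInter]
      rw [heq]
      refine isClosed_iInter fun i => isClosed_le ?_ continuous_const
      simpa [Matrix.mulVec] using dot_cont N (fun j => A i j)
    exact h1.inter h2
  have key := aux12 N M hMcl hMne
  refine measure_mono_null (fun c hc => ?_) key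
  obtain ⟨hcB, hbad⟩ := hc
  rw [hB] at hcB
  refine ⟨hcB, fun h => hbad ?_⟩
  obtain ⟨v, hv, h1, h2⟩ := h
  refine ⟨v, hv, h1, h2, ?_⟩
  rintro ⟨x, y, a, β, hx, hy, hxy, hab, ha0, ha1, hveq⟩
  have hβ : 0 < β := by linarith
  have hdx : c ⬝ᵥ x ≤ c ⬝ᵥ v := h1 x hx
  have hdy : c ⬝ᵥ y ≤ c ⬝ᵥ v := h1 y hy
  have hsum : c ⬝ᵥ v = a * (c ⬝ᵥ x) + β * (c ⬝ᵥ y) := by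
    rw [hveq, dotProduct_add, dotProduct_smul, dotProduct_smul,
      smul_eq_mul, smul_eq_mul]
  have hxeq : c ⬝ᵥ x = c ⬝ᵥ v := by
    refine le_antisymm hdx ?_
    have hmul : a * (c ⬝ᵥ v) ≤ a * (c ⬝ᵥ x) := by
      have hV : a * (c ⬝ᵥ v) + β * (c ⬝ᵥ v) = c ⬝ᵥ v := by
        rw [← add_mul, hab, one_mul]
      linarith [mul_le_mul_of_nonneg_left hdy hβ.le]
    exact le_of_mul_le_mul_left hmul ha0
  have hyeq : c ⬝ᵥ y = c ⬝ᵥ v := by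
    refine le_antisymm hdy ?_
    have hmul : β * (c ⬝ᵥ v) ≤ β * (c ⬝ᵥ y) := by
      have hV : a * (c ⬝ᵥ v) + β * (c ⬝ᵥ v) = c ⬝ᵥ v := by
        rw [← add_mul, hab, one_mul]
      linarith [mul_le_mul_of_nonneg_left hdx ha0.le]
    exact le_of_mul_le_mul_left hmul hβ
  have hxv : x = v := h2 x hx fun w hw => hxeq ▸ h1 w hw
  have hyv : y = v := h2 y hy fun w hw => hyeq ▸ h1 w hw
  exact hxy (hxv.trans hyv.symm)
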